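/- arXiv:2412.18891 — 2 statements merged into one kernel-verified Lean document; each statement's English description precedes it below -/
import Mathlib

section
/- Let G be a non-trivial group, let 𝒞 be a joinable compression family for G, and let H = ⟨⋃𝒞⟩ be the subgroup of G generated by the members of 𝒞. If 𝒞 is moreover a shift-joinable compression family for H, then H is perfect (H = D(H)), H is simple, and H is the monolith of G (H is non-trivial, normal in G, and contained in every non-trivial normal subgroup of G). -/
namespace Paper

variable {G : Type*} [Group G]

/-- Conjugate of a subgroup: `g A g⁻¹`. -/
def conjS (g : G) (A : Subgroup G) : Subgroup G := A.map (MulAut.conj g).toMonoidHom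

/-- The family is invariant under conjugation in `G`. -/
def ConjInvariant (C : Set (Subgroup G)) : Prop := ∀ (g : G), ∀ A ∈ C, conjS g A ∈ C

/-- Condition (A): every member of the family is non-abelian. -/
def CondA (C : Set (Subgroup G)) : Prop :=
  ∀ A ∈ C, ∃ a ∈ A, ∃ b ∈ A, a * b ≠ b * a

/-- Condition (B): for every nontrivial element `g` of `H` there is a member `A` of the
family with `[A, gAg⁻¹] = 1`. -/
def CondB (C : Set (Subgroup G)) (H : Subgroup G) : Prop :=
  ∀ g ∈ H, g ≠ 1 → ∃ A ∈ C, ⁅A, conjS g A⁆ = (⊥ : Subgroup G)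

/-- Condition (C): `H` is semi-transitive on the family. -/
def CondC (C : Set (Subgroup G)) (H : Subgroup G) : Prop :=
  ∀ A ∈ C, ∀ B ∈ C, ∃ g ∈ H, conjS g A ≤ B

/-- Condition (D): the family is joinable. -/
def CondD (C : Set (Subgroup G)) : Prop :=
  ∀ A ∈ C, ∀ B ∈ C, ∀ C' ∈ C, ⁅A, C'⁆ = (⊥ : Subgroup G) → ¬ C' ≤ B →
    ∃ D ∈ C, A ⊔ B ≤ D

/-- Condition (E): the family is shiftable over `H`: for each `A` in the family there is
`g ∈ H` and a homomorphism from the unrestricted direct product `∏_{i ≥ 1} A` into `H`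
restricting to the identity on the first factor, which `g` conjugates by the shift. -/
def CondE (C : Set (Subgroup G)) (H : Subgroup G) : Prop :=
  ∀ A ∈ C, ∃ g ∈ H, ∃ φ : (ℕ → A) →* G,
    (∀ f : ℕ → A, φ f ∈ H) ∧
    (∀ a : A, φ (fun i => if i = 0 then a else 1) = (a : G)) ∧
    (∀ f : ℕ → A, g * φ f * g⁻¹ = φ (fun i => match i with | 0 => 1 | (n+1) => f n))

/-- Conditions (A)–(C): a compression family for `H`. -/
def IsCompressionFamily (C : Set (Subgroup G)) (H : Subgroup G) : Prop :=
  ConjInvariant C ∧ CondA C ∧ CondB C H ∧ CondC C H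

/-- Conditions (A)–(D): a joinable compression family for `H`. -/
def IsJoinableCompressionFamily (C : Set (Subgroup G)) (H : Subgroup G) : Prop :=
  IsCompressionFamily C H ∧ CondD C

/-- Conditions (A)–(E): a shift-joinable compression family for `H`. -/
def IsShiftJoinableCompressionFamily (C : Set (Subgroup G)) (H : Subgroup G) : Prop :=
  IsJoinableCompressionFamily C H ∧ CondE C H

/-! ### Auxiliary lemmas -/

open scoped commutatorElement

lemma mem_conjS_of_mem {g : G} {A : Subgroup G} {a : G} (ha : a ∈ A) :
    g * a * g⁻¹ ∈ conjS g A :=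
  Subgroup.mem_map.mpr ⟨a, ha, by simp⟩

lemma commute_of_conjS_bot {F : Subgroup G} {n : G} (h : ⁅F, conjS n F⁆ = ⊥) :
    ∀ u ∈ F, ∀ v ∈ F, ⁅u, n * v * n⁻¹⁆ = 1 := by
  intro u hu v hv
  have h2 := Subgroup.commutator_mem_commutator hu (mem_conjS_of_mem (g := n) hv)
  rwa [h, Subgroup.mem_bot] at h2

/-- The classical commutator lemma: if every element of `A₀` commutes with every
`n`-conjugate of an element of `A₀`, where `n ∈ N` and `N` is invariant under
conjugation by `S ⊇ A₀`, then all commutators of `A₀` lie in `N`. -/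
lemma derived_le_of_commuting (S N : Subgroup G)
    (hNc : ∀ s ∈ S, ∀ x ∈ N, s * x * s⁻¹ ∈ N)
    (A₀ : Subgroup G) (hA₀S : A₀ ≤ S) {n : G} (hnN : n ∈ N)
    (hcomm : ∀ u ∈ A₀, ∀ v ∈ A₀, ⁅u, n * v * n⁻¹⁆ = 1) :
    ∀ u ∈ A₀, ∀ v ∈ A₀, ⁅u, v⁆ ∈ N := by
  intro u hu v hv
  have hhN : v * n * v⁻¹ * n⁻¹ ∈ N := by
    have h1 : v * n * v⁻¹ ∈ N := hNc v (hA₀S hv) n hnN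
    have h2 : v * n * v⁻¹ * n⁻¹ = (v * n * v⁻¹) * n⁻¹ := by group
    rw [h2]; exact mul_mem h1 (inv_mem hnN)
  have hmemN : u * (v*n*v⁻¹*n⁻¹) * u⁻¹ * (v*n*v⁻¹*n⁻¹)⁻¹ ∈ N :=
    mul_mem (hNc u (hA₀S hu) _ hhN) (inv_mem hhN)
  have hc : Commute u (n * v⁻¹ * n⁻¹) :=
    commutatorElement_eq_one_iff_commute.mp (hcomm u hu v⁻¹ (inv_mem hv))
  have hcm : (n*v⁻¹*n⁻¹) * u⁻¹ = u⁻¹ * (n*v⁻¹*n⁻¹) := (hc.inv_left.eq).symm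
  have key : u * (v*n*v⁻¹*n⁻¹) * u⁻¹ * (v*n*v⁻¹*n⁻¹)⁻¹ = ⁅u, v⁆ := by
    calc u * (v*n*v⁻¹*n⁻¹) * u⁻¹ * (v*n*v⁻¹*n⁻¹)⁻¹
        = u * v * ((n*v⁻¹*n⁻¹) * u⁻¹) * (n*v*n⁻¹*v⁻¹) := by group
      _ = u * v * (u⁻¹ * (n*v⁻¹*n⁻¹)) * (n*v*n⁻¹*v⁻¹) := by rw [hcm]
      _ = ⁅u, v⁆ := by rw [commutatorElement_def]; group
  rw [← key]; exact hmemN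

/-- The core lemma: under conditions (B), (C), (D) over `S`, any subgroup `N` that is
invariant under `S`-conjugation and contains a nontrivial element of `S` contains all
commutators `⁅a, b⁆` with `a`, `b` in (possibly different) members of the family. -/
lemma commutator_mem_of_conds
    (C : Set (Subgroup G)) (hconj : ConjInvariant C)
    (S : Subgroup G)
    (hB : CondB C S) (hCc : CondC C S) (hD : CondD C)
    (hAS : ∀ A ∈ C, A ≤ S)
    (N : Subgroup G)
    (hNc : ∀ s ∈ S, ∀ x ∈ N, s * x * s⁻¹ ∈ N)
    {n : G} (hnN : n ∈ N) (hnS : n ∈ S) (hn1 : n ≠ 1) :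
    ∀ A ∈ C, ∀ B ∈ C, ∀ a ∈ A, ∀ b ∈ B, ⁅a, b⁆ ∈ N := by
  -- Step 1: commutators within a single member are in N.
  have Dall : ∀ E ∈ C, ∀ u ∈ E, ∀ v ∈ E, ⁅u, v⁆ ∈ N := by
    obtain ⟨A₀, hA₀C, hA₀⟩ := hB n hnS hn1
    have dstep : ∀ u ∈ A₀, ∀ v ∈ A₀, ⁅u, v⁆ ∈ N :=
      derived_le_of_commuting S N hNc A₀ (hAS A₀ hA₀C) hnN (commute_of_conjS_bot hA₀)
    intro E hE u hu v hv
    obtain ⟨s, hsS, hsle⟩ := hCc E hE A₀ hA₀C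
    have hu' : s * u * s⁻¹ ∈ A₀ := hsle (mem_conjS_of_mem hu)
    have hv' : s * v * s⁻¹ ∈ A₀ := hsle (mem_conjS_of_mem hv)
    have h1 : ⁅s*u*s⁻¹, s*v*s⁻¹⁆ ∈ N := dstep _ hu' _ hv'
    have h2 : ⁅s*u*s⁻¹, s*v*s⁻¹⁆ = s * ⁅u, v⁆ * s⁻¹ := by
      simp only [commutatorElement_def]; group
    rw [h2] at h1
    have h3 := hNc s⁻¹ (inv_mem hsS) _ h1
    have h4 : s⁻¹ * (s * ⁅u, v⁆ * s⁻¹) * (s⁻¹)⁻¹ = ⁅u, v⁆ := by group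
    rwa [h4] at h3
  -- Step 2: commutators between two members.
  intro A hA B hB' a ha b hb
  obtain ⟨F, hFC, hF⟩ := hB n hnS hn1
  obtain ⟨s, hsS, hsle⟩ := hCc A hA F hFC
  set m := s⁻¹ * n * s with hm
  have hmN : m ∈ N := by
    have := hNc s⁻¹ (inv_mem hsS) n hnN
    rwa [inv_inv] at this
  have hmS : m ∈ S := mul_mem (mul_mem (inv_mem hsS) hnS) hsS
  have hcommAA : ∀ u ∈ A, ∀ v ∈ A, ⁅u, m * v * m⁻¹⁆ = 1 := by
    intro u hu v hv
    have hu' : s * u * s⁻¹ ∈ F := hsle (mem_conjS_of_mem hu)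
    have hv' : s * v * s⁻¹ ∈ F := hsle (mem_conjS_of_mem hv)
    have h0 : ⁅s*u*s⁻¹, n*(s*v*s⁻¹)*n⁻¹⁆ = 1 := commute_of_conjS_bot hF _ hu' _ hv'
    have h1 : ⁅u, (s⁻¹*n*s) * v * (s⁻¹*n*s)⁻¹⁆ =
        s⁻¹ * ⁅s*u*s⁻¹, n*(s*v*s⁻¹)*n⁻¹⁆ * s := by
      simp only [commutatorElement_def]; group
    rw [hm, h1, h0]; group
  by_cases hsub : conjS m A ≤ B
  · -- The conjugate `mAm⁻¹` lands in `B`; conclude modulo `N` since `m ∈ N`.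
    have haS : a ∈ S := hAS A hA ha
    have hbS : b ∈ S := hAS B hB' hb
    have hxB : m * a * m⁻¹ ∈ B := hsub (mem_conjS_of_mem ha)
    have hxS : m * a * m⁻¹ ∈ S := mul_mem (mul_mem hmS haS) (inv_mem hmS)
    have hνN : m * b * m⁻¹ * b⁻¹ ∈ N := by
      have h1 : b * m⁻¹ * b⁻¹ ∈ N := hNc b hbS m⁻¹ (inv_mem hmN)
      have h2 : m * b * m⁻¹ * b⁻¹ = m * (b * m⁻¹ * b⁻¹) := by group
      rw [h2]; exact mul_mem hmN h1
    have hνS : m * b * m⁻¹ * b⁻¹ ∈ S :=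
      mul_mem (mul_mem (mul_mem hmS hbS) (inv_mem hmS)) (inv_mem hbS)
    have h1 : ⁅m*a*m⁻¹, b⁆ ∈ N := Dall B hB' _ hxB b hb
    have h2 : ⁅m*a*m⁻¹, m*b*m⁻¹*b⁻¹⁆ ∈ N := by
      rw [commutatorElement_def]
      exact mul_mem (hNc _ hxS _ hνN) (inv_mem hνN)
    have h3 : (m*b*m⁻¹*b⁻¹) * ⁅m*a*m⁻¹, b⁆ * (m*b*m⁻¹*b⁻¹)⁻¹ ∈ N := hNc _ hνS _ h1
    have inner : ⁅m*a*m⁻¹, m*b*m⁻¹*b⁻¹⁆ *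
        ((m*b*m⁻¹*b⁻¹) * ⁅m*a*m⁻¹, b⁆ * (m*b*m⁻¹*b⁻¹)⁻¹) ∈ N := mul_mem h2 h3
    have houter := hNc m⁻¹ (inv_mem hmS) _ inner
    rw [inv_inv] at houter
    have keyid : ⁅a, b⁆ = m⁻¹ * (⁅m*a*m⁻¹, m*b*m⁻¹*b⁻¹⁆ *
        ((m*b*m⁻¹*b⁻¹) * ⁅m*a*m⁻¹, b⁆ * (m*b*m⁻¹*b⁻¹)⁻¹)) * m := by
      simp only [commutatorElement_def]; group
    rw [keyid]; exact houter
  · -- Otherwise condition (D) gives a member containing both `A` and `B`.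
    have hbot : ⁅A, conjS m A⁆ = ⊥ := by
      rw [eq_bot_iff]
      refine Subgroup.commutator_le.mpr ?_
      intro u hu w hw
      obtain ⟨v, hv, rfl⟩ := Subgroup.mem_map.mp hw
      have hw' : (MulAut.conj m).toMonoidHom v = m * v * m⁻¹ := by simp
      rw [hw', Subgroup.mem_bot]
      exact hcommAA u hu v hv
    obtain ⟨D, hDC, hDle⟩ := hD A hA B hB' (conjS m A) (hconj m A hA) hbot hsub
    exact Dall D hDC a (hDle ((le_sup_left : A ≤ A ⊔ B) ha))
      b (hDle ((le_sup_right : B ≤ A ⊔ B) hb))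

/-- From commutators of pairs of members in `N`, get all commutators of `sSup C` in `N`. -/
lemma commutator_sSup_mem
    (C : Set (Subgroup G)) (N : Subgroup G)
    (hNc : ∀ s ∈ sSup C, ∀ x ∈ N, s * x * s⁻¹ ∈ N)
    (hpair : ∀ A ∈ C, ∀ B ∈ C, ∀ a ∈ A, ∀ b ∈ B, ⁅a, b⁆ ∈ N) :
    ∀ x ∈ sSup C, ∀ y ∈ sSup C, ⁅x, y⁆ ∈ N := by
  have hmem : ∀ A ∈ C, (A : Subgroup G) ≤ sSup C := fun A hA => le_sSup hA
  -- inner induction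
  have inner : ∀ x ∈ sSup C, (∀ B ∈ C, ∀ b ∈ B, ⁅x, b⁆ ∈ N) →
      ∀ y ∈ sSup C, ⁅x, y⁆ ∈ N := by
    intro x hxH hxbase y hy
    rw [sSup_eq_iSup'] at hy
    refine Subgroup.iSup_induction (x := y)
      (fun A : C => (A : Subgroup G)) (C := fun y => y ∈ sSup C ∧ ⁅x, y⁆ ∈ N) hy ?_ ?_ ?_
        |>.2
    · intro A z hz
      exact ⟨hmem A A.2 hz, hxbase A A.2 z hz⟩
    · refine ⟨one_mem _, ?_⟩
      have : ⁅x, (1:G)⁆ = 1 := by rw [commutatorElement_def]; group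
      rw [this]; exact one_mem N
    · rintro y z ⟨hyH, hyN⟩ ⟨hzH, hzN⟩
      refine ⟨mul_mem hyH hzH, ?_⟩
      have hid : ⁅x, y*z⁆ = ⁅x, y⁆ * (y * ⁅x, z⁆ * y⁻¹) := by
        simp only [commutatorElement_def]; group
      rw [hid]
      exact mul_mem hyN (hNc y hyH _ hzN)
  intro x hx
  rw [sSup_eq_iSup'] at hx
  refine Subgroup.iSup_induction (x := x)
    (fun A : C => (A : Subgroup G))
    (C := fun x => x ∈ sSup C ∧ ∀ y ∈ sSup C, ⁅x, y⁆ ∈ N) hx ?_ ?_ ?_ |>.2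
  · intro A z hz
    have hzH : z ∈ sSup C := hmem A A.2 hz
    exact ⟨hzH, inner z hzH (fun B hB b hb => hpair A A.2 B hB z hz b hb)⟩
  · refine ⟨one_mem _, fun y hy => ?_⟩
    have : ⁅(1:G), y⁆ = 1 := by rw [commutatorElement_def]; group
    rw [this]; exact one_mem N
  · rintro x₁ x₂ ⟨hx₁H, hx₁⟩ ⟨hx₂H, hx₂⟩
    refine ⟨mul_mem hx₁H hx₂H, fun y hy => ?_⟩
    have hid : ⁅x₁*x₂, y⁆ = (x₁ * ⁅x₂, y⁆ * x₁⁻¹) * ⁅x₁, y⁆ := by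
      simp only [commutatorElement_def]; group
    rw [hid]
    exact mul_mem (hNc x₁ hx₁H _ (hx₂ y hy)) (hx₁ y hy)

/-- Perfectness from condition (E). -/
lemma perfect_of_condE (C : Set (Subgroup G)) (hE : CondE C (sSup C)) :
    sSup C ≤ ⁅sSup C, sSup C⁆ := by
  refine sSup_le ?_
  intro A hAC a ha
  obtain ⟨g, hgH, φ, hφH, hφ0, hφs⟩ := hE A hAC
  set aa : ↥A := ⟨a, ha⟩ with haa
  set φc : G := φ (fun _ => aa) with hφc
  have h1 : g * φc * g⁻¹ = φ (fun i => match i with | 0 => 1 | (n+1) => aa) :=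
    hφs (fun _ => aa)
  have h3 : (fun _ => aa : ℕ → ↥A) =
      (fun i => if i = 0 then aa else 1) *
      (fun i => match i with | 0 => 1 | (n+1) => aa) := by
    funext i
    cases i with
    | zero => simp [Pi.mul_apply]
    | succ k => simp [Pi.mul_apply]
  have key : φc = a * (g * φc * g⁻¹) := by
    rw [hφc]
    nth_rewrite 1 [h3]
    rw [map_mul, hφ0 aa, h1]
  have ha2 : a = ⁅φc, g⁆ := by
    have h5 : a = φc * (g * φc * g⁻¹)⁻¹ := eq_mul_inv_of_mul_eq key.symm
    rw [commutatorElement_def, h5]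
    group
  rw [ha2]
  exact Subgroup.commutator_mem_commutator (hφH _) hgH

/-- Theorem (compressible splittable union, part (iii)): if 𝒞 is a joinable compression
family for `G`, `H = ⟨⋃𝒞⟩`, and 𝒞 is moreover a shift-joinable compression family for
`H`, then `H` is perfect, simple, and is the monolith of `G`. -/
theorem perfect_simple_monolith [Nontrivial G] (C : Set (Subgroup G))
    (hC : IsJoinableCompressionFamily C (⊤ : Subgroup G))
    (H : Subgroup G) (hH : H = sSup C)
    (hshift : IsShiftJoinableCompressionFamily C H) :
    H = (⁅H, H⁆ : Subgroup G) ∧ IsSimpleGroup ↥H ∧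
      H.Normal ∧ H ≠ ⊥ ∧ ∀ N : Subgroup G, N.Normal → N ≠ ⊥ → H ≤ N := by
  subst hH
  obtain ⟨⟨hconj, hA, hBt, hCt⟩, hDt⟩ := hC
  obtain ⟨⟨⟨_, _, hBH, hCH⟩, _⟩, hE⟩ := hshift
  set H := sSup C with hHdef
  have hAS : ∀ A ∈ C, (A : Subgroup G) ≤ H := fun A hA => le_sSup hA
  -- H is nontrivial
  obtain ⟨g₀, hg₀⟩ := exists_ne (1 : G)
  obtain ⟨A₀, hA₀C, _⟩ := hBt g₀ (Subgroup.mem_top g₀) hg₀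
  obtain ⟨a₀, ha₀A, b₀, hb₀A, hab₀⟩ := hA A₀ hA₀C
  have ha₀1 : a₀ ≠ 1 := by rintro rfl; simp at hab₀
  have ha₀H : a₀ ∈ H := hAS A₀ hA₀C ha₀A
  have hHbot : H ≠ ⊥ := by
    intro h
    rw [h, Subgroup.mem_bot] at ha₀H
    exact ha₀1 ha₀H
  -- perfectness
  have hperfle : H ≤ ⁅H, H⁆ := perfect_of_condE C hE
  have hperfge : ⁅H, H⁆ ≤ H := by
    refine Subgroup.commutator_le.mpr ?_
    intro x hx y hy
    rw [commutatorElement_def]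
    exact mul_mem (mul_mem (mul_mem hx hy) (inv_mem hx)) (inv_mem hy)
  have hperf : H = ⁅H, H⁆ := le_antisymm hperfle hperfge
  -- normality
  have hnormal : H.Normal := by
    constructor
    intro x hx g
    have hmap : H.map (MulAut.conj g).toMonoidHom ≤ H := by
      rw [hHdef, (Subgroup.gc_map_comap (MulAut.conj g).toMonoidHom).l_sSup]
      refine iSup₂_le fun A hA => ?_
      exact le_sSup (hconj g A hA)
    have : (MulAut.conj g).toMonoidHom x ∈ H.map (MulAut.conj g).toMonoidHom :=
      Subgroup.mem_map_of_mem _ hx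
    have h2 : (MulAut.conj g).toMonoidHom x = g * x * g⁻¹ := by simp
    rw [h2] at this
    exact hmap this
  refine ⟨hperf, ?_, hnormal, hHbot, ?_⟩
  · -- simplicity
    have hnontriv : Nontrivial ↥H :=
      ⟨⟨⟨a₀, ha₀H⟩, 1, fun h => ha₀1 (congrArg Subtype.val h)⟩⟩
    refine { toNontrivial := hnontriv, eq_bot_or_eq_top_of_normal := ?_ }
    intro N' hN'norm
    by_cases hbot : N' = ⊥
    · exact Or.inl hbot
    right
    -- pick a nontrivial element of N'
    have hex : ∃ y : ↥H, y ∈ N' ∧ y ≠ 1 := by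
      by_contra hcon
      push_neg at hcon
      exact hbot ((Subgroup.eq_bot_iff_forall N').mpr hcon)
    obtain ⟨y, hyN', hy1⟩ := hex
    set N : Subgroup G := N'.map H.subtype with hNdef
    have hnN : (y : G) ∈ N := Subgroup.mem_map_of_mem _ hyN'
    have hnH : (y : G) ∈ H := y.2
    have hn1 : (y : G) ≠ 1 := by
      intro h
      exact hy1 (Subtype.ext h)
    have hNc : ∀ s ∈ H, ∀ x ∈ N, s * x * s⁻¹ ∈ N := by
      intro s hs x hx
      obtain ⟨z, hz, rfl⟩ := Subgroup.mem_map.mp hx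
      have hmem := hN'norm.conj_mem z hz ⟨s, hs⟩
      refine Subgroup.mem_map.mpr ⟨_, hmem, ?_⟩
      simp
    have hpair := commutator_mem_of_conds C hconj H hBH hCH hDt hAS N hNc hnN hnH hn1
    have hall := commutator_sSup_mem C N hNc hpair
    have hHleN : H ≤ N := by
      calc H = ⁅H, H⁆ := hperf
        _ ≤ N := Subgroup.commutator_le.mpr hall
    -- conclude N' = ⊤
    rw [Subgroup.eq_top_iff']
    intro z
    have hzN : (z : G) ∈ N := hHleN z.2
    obtain ⟨w, hw, hwz⟩ := Subgroup.mem_map.mp hzN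
    have : w = z := Subtype.ext hwz
    rwa [this] at hw
  · -- monolith
    intro N hNnorm hNbot
    have hex : ∃ x ∈ N, x ≠ 1 := by
      by_contra hcon
      push_neg at hcon
      exact hNbot ((Subgroup.eq_bot_iff_forall N).mpr hcon)
    obtain ⟨n, hnN, hn1⟩ := hex
    have hNc : ∀ s ∈ (⊤ : Subgroup G), ∀ x ∈ N, s * x * s⁻¹ ∈ N :=
      fun s _ x hx => hNnorm.conj_mem x hx s
    have hpair := commutator_mem_of_conds C hconj ⊤ hBt hCt hDt
      (fun A _ => le_top) N hNc hnN (Subgroup.mem_top n) hn1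
    have hall := commutator_sSup_mem C N (fun s _ x hx => hNnorm.conj_mem x hx s) hpair
    calc H = ⁅H, H⁆ := hperf
      _ ≤ N := Subgroup.commutator_le.mpr hall

end Paper
end

section
/- Let G be a non-trivial group, let 𝒞 be a joinable compression family for G, and let H be a normal subgroup of G that is semi-transitive on 𝒞. Then for every A ∈ 𝒞 there exists g ∈ H such that [gᵐAg⁻ᵐ, gⁿAg⁻ⁿ] = {1} for all distinct integers m, n ∈ ℤ. -/
namespace Paper

variable {G : Type*} [Group G]

/-! ### Auxiliary lemmas about `conjS` -/

lemma mem_conjS {g x : G} {A : Subgroup G} : x ∈ conjS g A ↔ g⁻¹ * x * g ∈ A := by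
  rw [conjS, Subgroup.mem_map_equiv]
  simp [mul_assoc]

lemma conjS_mul (g h : G) (A : Subgroup G) : conjS (g * h) A = conjS g (conjS h A) := by
  ext x
  simp [mem_conjS, mul_assoc]

lemma conjS_one (A : Subgroup G) : conjS (1 : G) A = A := by
  ext x; simp [mem_conjS]

lemma conjS_mono (g : G) {A B : Subgroup G} (h : A ≤ B) : conjS g A ≤ conjS g B :=
  Subgroup.map_mono h

lemma conjS_inj {g : G} {A B : Subgroup G} (h : conjS g A = conjS g B) : A = B := by
  have h2 := congrArg (conjS g⁻¹) h
  rwa [← conjS_mul, ← conjS_mul, inv_mul_cancel, conjS_one, conjS_one] at h2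

lemma conjS_bot (g : G) : conjS g (⊥ : Subgroup G) = ⊥ := by
  ext x
  rw [mem_conjS]
  simp only [Subgroup.mem_bot]
  constructor
  · intro h
    have h2 : x = g * (g⁻¹ * x * g) * g⁻¹ := by group
    rw [h2, h]
    group
  · rintro rfl
    simp

lemma conjS_commutator (g : G) (A B : Subgroup G) :
    ⁅conjS g A, conjS g B⁆ = conjS g ⁅A, B⁆ :=
  (Subgroup.map_commutator A B (MulAut.conj g).toMonoidHom).symm

lemma conjS_self_of_mem {a : G} {F : Subgroup G} (ha : a ∈ F) : conjS a F = F := by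
  ext x
  rw [mem_conjS]
  constructor
  · intro h
    have h2 := F.mul_mem (F.mul_mem ha h) (F.inv_mem ha)
    have h3 : a * (a⁻¹ * x * a) * a⁻¹ = x := by group
    rwa [h3] at h2
  · intro h
    exact F.mul_mem (F.mul_mem (F.inv_mem ha) h) ha

lemma conjS_eq_self_of_commute {a : G} {F : Subgroup G}
    (h : ∀ x ∈ F, a * x = x * a) : conjS a F = F := by
  ext x
  rw [mem_conjS]
  constructor
  · intro hx
    have h2 := h _ hx
    have h3 : x = a⁻¹ * x * a := by
      have h4 : a * (a⁻¹ * x * a) = x * a := by group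
      rw [h2] at h4
      exact mul_right_cancel h4.symm
    rw [h3]; exact hx
  · intro hx
    have h2 := h x hx
    have h3 : a⁻¹ * x * a = x := by
      rw [mul_assoc, ← h2, ← mul_assoc, inv_mul_cancel, one_mul]
    rw [h3]; exact hx

lemma commute_of_commutator_eq_bot {P Q : Subgroup G} (h : ⁅P, Q⁆ = (⊥ : Subgroup G)) :
    ∀ p ∈ P, ∀ q ∈ Q, p * q = q * p := by
  intro p hp q hq
  have hle : ⁅P, Q⁆ ≤ ⊥ := le_of_eq h
  have h2 := Subgroup.commutator_le.mp hle p hp q hq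
  rw [Subgroup.mem_bot] at h2
  exact commutatorElement_eq_one_iff_mul_comm.mp h2

/-- Lemma (leafless, part (ii)): if 𝒞 is a joinable compression family for `G` and `H` is
a normal subgroup of `G` that is semi-transitive on 𝒞, then for every `A ∈ 𝒞` there is
`g ∈ H` such that the conjugates `gⁿAg⁻ⁿ` (for `n ∈ ℤ`) pairwise commute. -/
theorem exists_shifting_element [Nontrivial G] (C : Set (Subgroup G))
    (hC : IsJoinableCompressionFamily C (⊤ : Subgroup G))
    (H : Subgroup G) (hN : H.Normal) (hsemi : CondC C H) :
    ∀ A ∈ C, ∃ g ∈ H, ∀ m n : ℤ, m ≠ n →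
      ⁅conjS (g ^ m) A, conjS (g ^ n) A⁆ = (⊥ : Subgroup G) := by
  obtain ⟨⟨hinv, hcondA, hcondB, hcondC⟩, hcondD⟩ := hC
  intro A hA
  by_cases hstar : ∃ D ∈ C, ∃ E ∈ C, ∃ F ∈ C, E ≤ D ∧ F ≤ D ∧ ⁅E, F⁆ = (⊥ : Subgroup G)
  · -- Good case: a member D contains a commuting pair E, F of members.
    obtain ⟨D, hD, E, hE, F, hF, hED, hFD, hEF⟩ := hstar
    obtain ⟨t, -, ht⟩ := hcondC A hA E hE
    set A₁ := conjS t A with hA₁def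
    have hA₁E : A₁ ≤ E := ht
    have hA₁F : ⁅A₁, F⁆ = (⊥ : Subgroup G) := by
      have h1 : ⁅A₁, F⁆ ≤ ⊥ := by
        calc ⁅A₁, F⁆ ≤ ⁅E, F⁆ := Subgroup.commutator_mono hA₁E le_rfl
        _ = ⊥ := hEF
      exact le_bot_iff.mp h1
    obtain ⟨g, hgH, hgD⟩ := hsemi D hD F hF
    have hpow : ∀ j : ℕ, conjS (g ^ (j + 1)) D ≤ F := by
      intro j
      induction j with
      | zero => simpa using hgD
      | succ n ih =>
        have h1 : g ^ (n + 2) = g ^ (n + 1) * g := by rw [pow_succ]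
        rw [h1, conjS_mul]
        calc conjS (g ^ (n + 1)) (conjS g D) ≤ conjS (g ^ (n + 1)) F := conjS_mono _ hgD
        _ ≤ conjS (g ^ (n + 1)) D := conjS_mono _ hFD
        _ ≤ F := ih
    have key : ∀ m n : ℤ, m < n →
        ⁅conjS (g ^ m) A₁, conjS (g ^ n) A₁⁆ = (⊥ : Subgroup G) := by
      intro m n hmn
      obtain ⟨j, hj⟩ : ∃ j : ℕ, n - m = (j : ℤ) + 1 := ⟨(n - m - 1).toNat, by omega⟩
      have hzn : g ^ n = g ^ m * g ^ (j + 1) := by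
        rw [← zpow_natCast g (j + 1), ← zpow_add]
        congr 1
        push_cast
        omega
      have hsub : conjS (g ^ (j + 1)) A₁ ≤ F :=
        le_trans (conjS_mono _ (le_trans hA₁E hED)) (hpow j)
      have hcm : ⁅A₁, conjS (g ^ (j + 1)) A₁⁆ = (⊥ : Subgroup G) := by
        have h1 : ⁅A₁, conjS (g ^ (j + 1)) A₁⁆ ≤ ⊥ := by
          calc ⁅A₁, conjS (g ^ (j + 1)) A₁⁆ ≤ ⁅A₁, F⁆ :=
                Subgroup.commutator_mono le_rfl hsub
          _ = ⊥ := hA₁F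
        exact le_bot_iff.mp h1
      rw [hzn, conjS_mul, conjS_commutator, hcm, conjS_bot]
    refine ⟨t⁻¹ * g * t, ?_, ?_⟩
    · have h1 := hN.conj_mem g hgH t⁻¹
      simpa using h1
    · intro m n hmn
      have hg' : ∀ k : ℤ, (t⁻¹ * g * t) ^ k = t⁻¹ * g ^ k * t := by
        intro k
        have h1 : t⁻¹ * g * t = t⁻¹ * g * t⁻¹⁻¹ := by rw [inv_inv]
        rw [h1, conj_zpow, inv_inv]
      have hconj : ∀ k : ℤ, conjS ((t⁻¹ * g * t) ^ k) A = conjS t⁻¹ (conjS (g ^ k) A₁) := by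
        intro k
        rw [hg', hA₁def, ← conjS_mul, ← conjS_mul, mul_assoc]
      rcases lt_or_gt_of_ne hmn with h | h
      · rw [hconj, hconj, conjS_commutator, key m n h, conjS_bot]
      · rw [hconj, hconj, conjS_commutator, Subgroup.commutator_comm, key n m h, conjS_bot]
  · -- Bad case: derive a contradiction.
    exfalso
    push_neg at hstar
    have nonab : ∀ P ∈ C, ⁅P, P⁆ ≠ (⊥ : Subgroup G) := by
      intro P hP h
      obtain ⟨a, ha, b, hb, hab⟩ := hcondA P hP
      exact hab (commute_of_commutator_eq_bot h a ha b hb)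
    -- (a) a member inside a side of a commuting pair equals it
    have lemA : ∀ P ∈ C, ∀ Q ∈ C, ⁅P, Q⁆ = (⊥ : Subgroup G) →
        ∀ M ∈ C, M ≤ P → M = P := by
      intro P hP Q hQ hPQ M hM hMP
      by_contra hne
      have hQP : ⁅Q, P⁆ = (⊥ : Subgroup G) := by rw [Subgroup.commutator_comm]; exact hPQ
      have hnotPM : ¬ P ≤ M := fun h => hne (le_antisymm hMP h)
      obtain ⟨D, hD, hle⟩ := hcondD Q hQ M hM P hP hQP hnotPM
      refine hstar D hD Q hQ M hM (le_trans le_sup_left hle) (le_trans le_sup_right hle) ?_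
      have h1 : ⁅Q, M⁆ ≤ ⊥ := by
        calc ⁅Q, M⁆ ≤ ⁅Q, P⁆ := Subgroup.commutator_mono le_rfl hMP
        _ = ⊥ := hQP
      exact le_bot_iff.mp h1
    -- (a') a member containing a side of a commuting pair equals it
    have lemA' : ∀ P ∈ C, ∀ Q ∈ C, ⁅P, Q⁆ = (⊥ : Subgroup G) →
        ∀ M ∈ C, Q ≤ M → Q = M := by
      intro P hP Q hQ hPQ M hM hQM
      obtain ⟨u, -, hu⟩ := hcondC M hM Q hQ
      have hQP : ⁅Q, P⁆ = (⊥ : Subgroup G) := by rw [Subgroup.commutator_comm]; exact hPQ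
      have h2 : conjS u M = Q := lemA Q hQ P hP hQP _ (hinv u M hM) hu
      have h3 : conjS u Q ≤ Q := by
        have h5 := conjS_mono u hQM
        rwa [h2] at h5
      have h4 : conjS u Q = Q := lemA Q hQ P hP hQP _ (hinv u Q hQ) h3
      exact conjS_inj (h4.trans h2.symm)
    -- a commuting pair exists
    obtain ⟨g₀, hg₀⟩ := exists_ne (1 : G)
    obtain ⟨P, hP, hPQ⟩ := hcondB g₀ (Subgroup.mem_top g₀) hg₀
    set Q := conjS g₀ P with hQdef
    have hQ : Q ∈ C := hinv g₀ P hP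
    -- the family is contained in {P, Q}
    have hall : ∀ B₀ ∈ C, B₀ = P ∨ B₀ = Q := by
      intro B₀ hB₀
      by_cases hBQ : B₀ = Q
      · right; exact hBQ
      left
      have hnQB : ¬ Q ≤ B₀ := fun h => hBQ (lemA' P hP Q hQ hPQ B₀ hB₀ h).symm
      obtain ⟨D, hD, hle⟩ := hcondD P hP B₀ hB₀ Q hQ hPQ hnQB
      have hQP : ⁅Q, P⁆ = (⊥ : Subgroup G) := by rw [Subgroup.commutator_comm]; exact hPQ
      have hPD : P = D := lemA' Q hQ P hP hQP D hD (le_trans le_sup_left hle)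
      have hBP : B₀ ≤ P := by rw [hPD]; exact le_trans le_sup_right hle
      exact lemA P hP Q hQ hPQ B₀ hB₀ hBP
    have hcomm := commute_of_commutator_eq_bot hPQ
    -- a noncentral element of A
    obtain ⟨a, ha, b, hb, hab⟩ := hcondA A hA
    have ha1 : a ≠ 1 := by rintro rfl; exact hab (by simp)
    obtain ⟨F, hF, hFcomm⟩ := hcondB a (Subgroup.mem_top a) ha1
    have hfix : conjS a F = F := by
      rcases hall F hF with hFP | hFQ
      · rcases hall A hA with hAP | hAQ
        · exact conjS_self_of_mem (by rw [hFP, ← hAP]; exact ha)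
        · refine conjS_eq_self_of_commute ?_
          intro x hx
          exact (hcomm x (by rw [← hFP]; exact hx) a (by rw [← hAQ]; exact ha)).symm
      · rcases hall A hA with hAP | hAQ
        · refine conjS_eq_self_of_commute ?_
          intro x hx
          exact hcomm a (by rw [← hAP]; exact ha) x (by rw [← hFQ]; exact hx)
        · exact conjS_self_of_mem (by rw [hFQ, ← hAQ]; exact ha)
    rw [hfix] at hFcomm
    exact nonab F hF hFcomm

end Paper
end
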